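/- Let K be a field, X = (X_{ij}) the n×n matrix of indeterminates, and R = K[X_{ij} : 1 ≤ i,j ≤ n]. Let < be the lexicographic monomial order on R induced by the variable order X_{11} > X_{12} > ⋯ > X_{1n} > X_{21} > ⋯ > X_{nn}. Then for all positive integers t, a with t + a ≤ n+1, the initial ideal ini_<(I_t(a)), i.e., the ideal generated by the leading monomials of the nonzero elements of I_t(a), equals J_t(a). -/

import Mathlib

open MvPolynomial

/-- The northeast ideal `I_t(a)` in `K[X_ij]`, the variables being indexed by
`Fin n ×ₗ Fin n` (pairs ordered lexicographically, so `X_{11}` corresponds to the least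
index): the ideal generated by the `t`-minors (maximal minors) of the submatrix
`X_t(a) = (X_ij : 1 ≤ i ≤ t, a ≤ j ≤ n)` (indices encoded `0`-based). -/
noncomputable def neIdealL (K : Type*) [Field K] (n t a : ℕ) :
    Ideal (MvPolynomial (Fin n ×ₗ Fin n) K) :=
  Ideal.span {f | ∃ r c : Fin t → Fin n,
    (∀ i : Fin t, (r i : ℕ) = (i : ℕ)) ∧ StrictMono c ∧ (∀ j : Fin t, a ≤ (c j : ℕ) + 1) ∧
    f = Matrix.det (Matrix.of fun i j : Fin t => X (toLex (r i, c j)))}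

/-- The monomial ideal `J_t(a)`: generated by the products `X_{1 b_1} ⋯ X_{t b_t}` with
`a ≤ b_1 < ⋯ < b_t ≤ n` (indices encoded `0`-based). -/
noncomputable def neMonIdealL (K : Type*) [Field K] (n t a : ℕ) :
    Ideal (MvPolynomial (Fin n ×ₗ Fin n) K) :=
  Ideal.span {f | ∃ r c : Fin t → Fin n,
    (∀ i : Fin t, (r i : ℕ) = (i : ℕ)) ∧ StrictMono c ∧ (∀ j : Fin t, a ≤ (c j : ℕ) + 1) ∧
    f = ∏ i : Fin t, X (toLex (r i, c i))}

/-- The initial ideal of `I` with respect to the lexicographic monomial order determined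
by `X_{11} > X_{12} > ⋯ > X_{1n} > X_{21} > ⋯ > X_{nn}`: the ideal generated by the
leading monomials (the lexicographically largest monomials of the support) of the
nonzero elements of `I`.  A monomial `m` beats `m'` when, at the most significant
variable (least index in the lexicographic order on `Fin n ×ₗ Fin n`) where the exponents
differ, the exponent of `m` is larger; this is the order `toLex m' ≤ toLex m` on
exponent vectors. -/
noncomputable def lexInitialIdeal {n : ℕ} {K : Type*} [Field K]
    (I : Ideal (MvPolynomial (Fin n ×ₗ Fin n) K)) :
    Ideal (MvPolynomial (Fin n ×ₗ Fin n) K) :=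
  Ideal.span {g | ∃ f ∈ I, ∃ m ∈ f.support,
    (∀ m' ∈ f.support, toLex m' ≤ toLex m) ∧ g = monomial m (1 : K)}


namespace LexNE

open Finset

noncomputable section

variable {K : Type*} [Field K] {n t : ℕ}

/-- the row embedding -/
def vr (htn : t ≤ n) (i : Fin t) : Fin n := Fin.castLE htn i

/-- the variable index of cell (i,j) -/
def idx (htn : t ≤ n) (i : Fin t) (j : Fin n) : Fin n ×ₗ Fin n := toLex (vr htn i, j)

/-- single exponent -/
def sgl (htn : t ≤ n) (i : Fin t) (j : Fin n) : (Fin n ×ₗ Fin n) →₀ ℕ :=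
  Finsupp.single (idx htn i j) 1

/-- diagonal exponent vector of a column tuple -/
def dd (htn : t ≤ n) (c : Fin t → Fin n) : (Fin n ×ₗ Fin n) →₀ ℕ := ∑ i, sgl htn i (c i)

/-- permuted diagonal -/
def dgp (htn : t ≤ n) (c : Fin t → Fin n) (σ : Equiv.Perm (Fin t)) : (Fin n ×ₗ Fin n) →₀ ℕ :=
  ∑ i, sgl htn (σ i) (c i)

/-- the minor with rows 0..t-1 and columns c -/
def Dt (K : Type*) [Field K] (htn : t ≤ n) (c : Fin t → Fin n) :
    MvPolynomial (Fin n ×ₗ Fin n) K :=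
  (Matrix.of fun i j : Fin t => X (idx htn i (c j))).det

/-- admissible column tuples -/
def Ok (aa : ℕ) (c : Fin t → Fin n) : Prop := StrictMono c ∧ ∀ j, aa ≤ (c j : ℕ) + 1

/-- greedy (lex-maximal diagonal) pairs -/
def Greedy (htn : t ≤ n) (aa : ℕ) (μ : (Fin n ×ₗ Fin n) →₀ ℕ) (c : Fin t → Fin n) : Prop :=
  Ok aa c ∧ ∀ d : Fin t → Fin n, Ok aa d → dd htn d ≤ μ + dd htn c →
    toLex (dd htn d) ≤ toLex (dd htn c)

/-- all monomial multiples of minors -/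
def Prods (K : Type*) [Field K] (htn : t ≤ n) (aa : ℕ) : Set (MvPolynomial (Fin n ×ₗ Fin n) K) :=
  {q | ∃ μ c, Ok aa c ∧ q = monomial μ 1 * Dt K htn c}

/-- monomial multiples of minors in greedy position -/
def GPs (K : Type*) [Field K] (htn : t ≤ n) (aa : ℕ) : Set (MvPolynomial (Fin n ×ₗ Fin n) K) :=
  {q | ∃ μ c, Greedy htn aa μ c ∧ q = monomial μ 1 * Dt K htn c}

section Basic

variable (htn : t ≤ n)

lemma vr_val (i : Fin t) : (vr htn i : ℕ) = (i : ℕ) := rfl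

lemma vr_inj : Function.Injective (vr htn) := fun i j h => by
  apply Fin.ext; have := congrArg Fin.val h; exact this

lemma idx_eq_iff {i i' : Fin t} {j j' : Fin n} :
    idx htn i j = idx htn i' j' ↔ i = i' ∧ j = j' := by
  constructor
  · intro h
    have h2 : (vr htn i, j) = (vr htn i', j') := toLex.injective h
    rw [Prod.ext_iff] at h2
    exact ⟨vr_inj htn h2.1, h2.2⟩
  · rintro ⟨rfl, rfl⟩; rfl

lemma sgl_apply_idx (i r : Fin t) (j s : Fin n) :
    sgl htn i j (idx htn r s) = if i = r ∧ j = s then 1 else 0 := by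
  rw [sgl, Finsupp.single_apply]
  by_cases h : i = r ∧ j = s
  · rw [if_pos (idx_eq_iff htn |>.mpr h), if_pos h]
  · rw [if_neg (fun hh => h ((idx_eq_iff htn).mp hh)), if_neg h]

lemma dd_apply_idx (c : Fin t → Fin n) (r : Fin t) (s : Fin n) :
    dd htn c (idx htn r s) = if c r = s then 1 else 0 := by
  rw [dd, Finsupp.finset_sum_apply]
  rw [Finset.sum_eq_single_of_mem r (Finset.mem_univ r)]
  · rw [sgl_apply_idx]
    by_cases h : c r = s
    · rw [if_pos ⟨rfl, h⟩, if_pos h]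
    · rw [if_neg (fun hh => h hh.2), if_neg h]
  · intro i _ hi
    rw [sgl_apply_idx, if_neg (fun hh => hi hh.1)]

lemma dgp_apply_idx (c : Fin t → Fin n) (σ : Equiv.Perm (Fin t)) (r : Fin t) (s : Fin n) :
    dgp htn c σ (idx htn r s) = if c (σ⁻¹ r) = s then 1 else 0 := by
  rw [dgp, Finsupp.finset_sum_apply]
  rw [Finset.sum_eq_single_of_mem (σ⁻¹ r) (Finset.mem_univ _)]
  · rw [sgl_apply_idx]
    by_cases h : c (σ⁻¹ r) = s
    · rw [if_pos ⟨by simp, h⟩, if_pos h]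
    · rw [if_neg (fun hh => h hh.2), if_neg h]
  · intro i _ hi
    rw [sgl_apply_idx]
    refine if_neg (fun hh => hi ?_)
    rw [← hh.1]; simp

/-- master witness lemma for lex comparisons -/
lemma lt_of_row_witness (x y : (Fin n ×ₗ Fin n) →₀ ℕ) (i₀ : Fin t) (s₀ : Fin n)
    (hlt : ∀ i : Fin t, (i : ℕ) < (i₀ : ℕ) → ∀ s : Fin n, x (idx htn i s) = y (idx htn i s))
    (heq : ∀ s : Fin n, (s : ℕ) < (s₀ : ℕ) → x (idx htn i₀ s) = y (idx htn i₀ s))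
    (hw : x (idx htn i₀ s₀) < y (idx htn i₀ s₀)) :
    toLex x < toLex y := by
  have key : ∀ (a b : Lex ((Fin n ×ₗ Fin n) →₀ ℕ)) (i : Fin n ×ₗ Fin n),
      (∀ j, j < i → ofLex a j = ofLex b j) → ofLex a i < ofLex b i → a < b :=
    fun a b i h1 h2 => Finsupp.Lex.lt_iff.mpr ⟨i, h1, h2⟩
  apply key (toLex x) (toLex y) (idx htn i₀ s₀)
  · intro q hq
    rw [show q = toLex (ofLex q) from rfl] at hq
    rw [idx, Prod.Lex.lt_iff] at hq
    simp only [ofLex_toLex] at hq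
    rcases hq with h1 | ⟨h1, h2⟩
    · have hrow : ((ofLex q).1 : ℕ) < (i₀ : ℕ) := h1
      have hit : ((ofLex q).1 : ℕ) < t := lt_of_lt_of_le hrow (Nat.le_of_lt_succ (Nat.lt_succ_of_lt i₀.isLt))
      set i : Fin t := ⟨(ofLex q).1, hit⟩ with hidef
      have hq_eq : q = idx htn i (ofLex q).2 := by
        rw [idx]
        apply congrArg toLex
        apply Prod.ext
        · apply Fin.ext; rfl
        · rfl
      have := hlt i hrow (ofLex q).2
      rw [show (ofLex (toLex x) : (Fin n ×ₗ Fin n) →₀ ℕ) = x from rfl,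
        show (ofLex (toLex y) : (Fin n ×ₗ Fin n) →₀ ℕ) = y from rfl]
      rw [hq_eq]; exact this
    · have hq_eq : q = idx htn i₀ (ofLex q).2 := by
        rw [idx]
        apply congrArg toLex
        apply Prod.ext
        · exact h1
        · rfl
      have := heq (ofLex q).2 h2
      rw [show (ofLex (toLex x) : (Fin n ×ₗ Fin n) →₀ ℕ) = x from rfl,
        show (ofLex (toLex y) : (Fin n ×ₗ Fin n) →₀ ℕ) = y from rfl]
      rw [hq_eq]; exact this
  · exact hw

lemma prodX {ι : Type*} (s : Finset ι) (f : ι → (Fin n ×ₗ Fin n)) :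
    (∏ i ∈ s, (X (f i) : MvPolynomial (Fin n ×ₗ Fin n) K)) =
      monomial (∑ i ∈ s, Finsupp.single (f i) 1) 1 := by
  classical
  induction s using Finset.cons_induction with
  | empty => simp [monomial_zero']
  | cons a s ha ih =>
      rw [Finset.prod_cons, Finset.sum_cons, ih, X, monomial_mul, one_mul]

lemma Dt_expand (c : Fin t → Fin n) :
    Dt K htn c = ∑ σ : Equiv.Perm (Fin t),
      monomial (dgp htn c σ) (((Equiv.Perm.sign σ : ℤ) : K)) := by
  rw [Dt, Matrix.det_apply']
  refine Finset.sum_congr rfl fun σ _ => ?_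
  have h1 : (∏ i, (Matrix.of fun i j : Fin t => (X (idx htn i (c j)) : MvPolynomial (Fin n ×ₗ Fin n) K)) (σ i) i)
      = monomial (dgp htn c σ) 1 := by
    simp only [Matrix.of_apply]
    rw [dgp]
    exact prodX Finset.univ (fun i => idx htn (σ i) (c i))
  rw [h1, ← map_intCast (C : K →+* MvPolynomial (Fin n ×ₗ Fin n) K) ((Equiv.Perm.sign σ : ℤ)),
    C_mul_monomial, mul_one]

lemma dgp_one (c : Fin t → Fin n) : dgp htn c 1 = dd htn c := by
  rw [dgp, dd]; rfl

lemma dgp_lt_dd (c : Fin t → Fin n) (hc : StrictMono c) (σ : Equiv.Perm (Fin t)) (hσ : σ ≠ 1) :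
    toLex (dgp htn c σ) < toLex (dd htn c) := by
  classical
  have hS : (Finset.univ.filter (fun i => σ i ≠ i)).Nonempty := by
    by_contra h
    apply hσ
    apply Equiv.ext
    intro i
    by_contra hi
    exact h ⟨i, Finset.mem_filter.mpr ⟨Finset.mem_univ _, hi⟩⟩
  set i₀ := (Finset.univ.filter (fun i => σ i ≠ i)).min' hS with hi₀def
  have hne : σ i₀ ≠ i₀ := (Finset.mem_filter.mp ((Finset.univ.filter (fun i => σ i ≠ i)).min'_mem hS)).2
  have hfix : ∀ i : Fin t, (i : ℕ) < (i₀ : ℕ) → σ i = i := by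
    intro i hi
    by_contra h
    have hmem : i ∈ Finset.univ.filter (fun j => σ j ≠ j) :=
      Finset.mem_filter.mpr ⟨Finset.mem_univ _, h⟩
    have : i₀ ≤ i := Finset.min'_le (Finset.univ.filter (fun j => σ j ≠ j)) i hmem
    exact absurd hi (not_lt.mpr this)
  have hfixinv : ∀ i : Fin t, (i : ℕ) < (i₀ : ℕ) → σ⁻¹ i = i := by
    intro i hi
    exact Equiv.Perm.inv_eq_iff_eq.mpr (hfix i hi).symm
  have hinvne : σ⁻¹ i₀ ≠ i₀ := by
    intro h
    apply hne
    have h2 := congrArg σ h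
    rw [show σ (σ⁻¹ i₀) = i₀ from σ.apply_symm_apply i₀] at h2
    exact h2.symm
  have hgt : i₀ < σ⁻¹ i₀ := by
    rcases lt_trichotomy (σ⁻¹ i₀) i₀ with h | h | h
    · exfalso
      have h2 : σ (σ⁻¹ i₀) = σ⁻¹ i₀ := hfix _ h
      rw [show σ (σ⁻¹ i₀) = i₀ from σ.apply_symm_apply i₀] at h2
      exact hinvne h2.symm
    · exact absurd h hinvne
    · exact h
  apply lt_of_row_witness htn _ _ i₀ (c i₀)
  · intro i hi s
    rw [dgp_apply_idx, dd_apply_idx, hfixinv i hi]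
  · intro s hs
    rw [dgp_apply_idx, dd_apply_idx]
    have h1 : ¬ (c (σ⁻¹ i₀) = s) := by
      intro h
      have h2 : (c i₀ : ℕ) < (c (σ⁻¹ i₀) : ℕ) := hc hgt
      rw [h] at h2
      omega
    have h2 : ¬ (c i₀ = s) := by
      intro h
      rw [h] at hs
      omega
    rw [if_neg h1, if_neg h2]
  · rw [dgp_apply_idx, dd_apply_idx, if_pos rfl, if_neg]
    · norm_num
    · intro h
      exact hinvne (hc.injective h)

lemma dgp_le_dd (c : Fin t → Fin n) (hc : StrictMono c) (σ : Equiv.Perm (Fin t)) :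
    toLex (dgp htn c σ) ≤ toLex (dd htn c) := by
  by_cases h : σ = 1
  · rw [h, dgp_one]
  · exact le_of_lt (dgp_lt_dd htn c hc σ h)

/-- coefficient of the top monomial of `monomial μ 1 * Dt c` is 1 -/
lemma coeff_top (μ : (Fin n ×ₗ Fin n) →₀ ℕ) (c : Fin t → Fin n) (hc : StrictMono c) :
    coeff (μ + dd htn c) (monomial μ 1 * Dt K htn c) = 1 := by
  rw [Dt_expand, Finset.mul_sum]
  have h1 : ∀ σ : Equiv.Perm (Fin t),
      (monomial μ (1:K)) * monomial (dgp htn c σ) (((Equiv.Perm.sign σ : ℤ) : K))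
      = monomial (μ + dgp htn c σ) (((Equiv.Perm.sign σ : ℤ) : K)) := by
    intro σ; rw [monomial_mul, one_mul]
  simp only [h1]
  rw [coeff_sum]
  rw [Finset.sum_eq_single_of_mem 1 (Finset.mem_univ _)]
  · rw [dgp_one, coeff_monomial, if_pos rfl]; simp
  · intro σ _ hσ
    rw [coeff_monomial, if_neg]
    intro h
    have h2 : dgp htn c σ = dd htn c := add_left_cancel h
    exact absurd (congrArg toLex h2) (ne_of_lt (dgp_lt_dd htn c hc σ hσ))

/-- all monomials of `monomial μ 1 * Dt c` are lex-at most the top one -/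
lemma supp_le_top (μ : (Fin n ×ₗ Fin n) →₀ ℕ) (c : Fin t → Fin n) (hc : StrictMono c) :
    ∀ m ∈ (monomial μ 1 * Dt K htn c).support, toLex m ≤ toLex (μ + dd htn c) := by
  classical
  intro m hm
  rw [Dt_expand, Finset.mul_sum] at hm
  have h1 : ∀ σ : Equiv.Perm (Fin t),
      (monomial μ (1:K)) * monomial (dgp htn c σ) (((Equiv.Perm.sign σ : ℤ) : K))
      = monomial (μ + dgp htn c σ) (((Equiv.Perm.sign σ : ℤ) : K)) := by
    intro σ; rw [monomial_mul, one_mul]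
  simp only [h1] at hm
  have h2 := MvPolynomial.support_sum hm
  rw [Finset.mem_biUnion] at h2
  obtain ⟨σ, _, hσ⟩ := h2
  have h3 : m = μ + dgp htn c σ := by
    rw [support_monomial] at hσ
    by_cases h : ((Equiv.Perm.sign σ : ℤ) : K) = 0
    · rw [if_pos h] at hσ
      simp at hσ
    · rw [if_neg h] at hσ
      simpa using hσ
  rw [h3]
  calc toLex (μ + dgp htn c σ) = toLex μ + toLex (dgp htn c σ) := rfl
    _ ≤ toLex μ + toLex (dd htn c) := by
        exact add_le_add_right (dgp_le_dd htn c hc σ) (toLex μ)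
    _ = toLex (μ + dd htn c) := rfl

end Basic

section Garnir

variable (c : Fin t → Fin n) (i₀ : Fin t) (b : Fin n)

/-- the column tuple `c` with `b` inserted at slot `i₀` -/
def Ecol : Fin (t + 1) → Fin n := fun q =>
  if h : (q : ℕ) < (i₀ : ℕ) then c ⟨q, lt_trans h i₀.isLt⟩
  else if (q : ℕ) = (i₀ : ℕ) then b
  else c ⟨(q : ℕ) - 1, by have h1 := q.isLt; have h2 := i₀.isLt; omega⟩

lemma Ecol_lt (i : Fin t) (hi : (i : ℕ) < (i₀ : ℕ)) : Ecol c i₀ b (Fin.castSucc i) = c i := by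
  have h : ((Fin.castSucc i : Fin (t+1)) : ℕ) < (i₀ : ℕ) := by simpa using hi
  rw [Ecol, dif_pos h]
  exact congrArg c (Fin.ext (by simp))

lemma Ecol_eq : Ecol c i₀ b (Fin.castSucc i₀) = b := by
  have h1 : ¬ ((Fin.castSucc i₀ : Fin (t+1)) : ℕ) < (i₀ : ℕ) := by simp
  have h2 : ((Fin.castSucc i₀ : Fin (t+1)) : ℕ) = (i₀ : ℕ) := by simp
  rw [Ecol, dif_neg h1, if_pos h2]

lemma Ecol_gt (i : Fin t) (hi : (i₀ : ℕ) ≤ (i : ℕ)) : Ecol c i₀ b (Fin.succ i) = c i := by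
  have h1 : ¬ ((Fin.succ i : Fin (t+1)) : ℕ) < (i₀ : ℕ) := by simp only [Fin.val_succ]; omega
  have h2 : ¬ ((Fin.succ i : Fin (t+1)) : ℕ) = (i₀ : ℕ) := by simp only [Fin.val_succ]; omega
  rw [Ecol, dif_neg h1, if_neg h2]
  exact congrArg c (Fin.ext (by simp))

lemma Ecol_strictMono (hc : StrictMono c) (hb1 : ∀ i : Fin t, (i : ℕ) < (i₀ : ℕ) → c i < b)
    (hb2 : b < c i₀) : StrictMono (Ecol c i₀ b) := by
  intro p q hpq
  rw [Fin.lt_def] at hpq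
  have hp := p.isLt
  have hq := q.isLt
  have hi := i₀.isLt
  rcases Nat.lt_trichotomy (p : ℕ) (i₀ : ℕ) with hp1 | hp1 | hp1 <;>
    rcases Nat.lt_trichotomy (q : ℕ) (i₀ : ℕ) with hq1 | hq1 | hq1
  · obtain ⟨p', rfl⟩ : ∃ p' : Fin t, p = Fin.castSucc p' :=
      ⟨⟨(p : ℕ), lt_trans hp1 hi⟩, Fin.ext (by simp)⟩
    obtain ⟨q', rfl⟩ : ∃ q' : Fin t, q = Fin.castSucc q' :=
      ⟨⟨(q : ℕ), lt_trans hq1 hi⟩, Fin.ext (by simp)⟩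
    simp only [Fin.coe_castSucc] at hp1 hq1 hpq
    rw [Ecol_lt c i₀ b p' hp1, Ecol_lt c i₀ b q' hq1]
    exact hc (Fin.lt_def.mpr hpq)
  · obtain ⟨p', rfl⟩ : ∃ p' : Fin t, p = Fin.castSucc p' :=
      ⟨⟨(p : ℕ), lt_trans hp1 hi⟩, Fin.ext (by simp)⟩
    obtain rfl : q = Fin.castSucc i₀ := Fin.ext (by simp [hq1])
    simp only [Fin.coe_castSucc] at hp1
    rw [Ecol_lt c i₀ b p' hp1, Ecol_eq]
    exact hb1 p' hp1
  · obtain ⟨p', rfl⟩ : ∃ p' : Fin t, p = Fin.castSucc p' :=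
      ⟨⟨(p : ℕ), lt_trans hp1 hi⟩, Fin.ext (by simp)⟩
    obtain ⟨q', rfl⟩ : ∃ q' : Fin t, q = Fin.succ q' :=
      ⟨⟨(q : ℕ) - 1, by omega⟩, Fin.ext (by simp; omega)⟩
    simp only [Fin.coe_castSucc, Fin.val_succ] at hp1 hq1 hpq
    rw [Ecol_lt c i₀ b p' hp1, Ecol_gt c i₀ b q' (by omega)]
    exact hc (Fin.lt_def.mpr (by omega))
  · omega
  · omega
  · obtain rfl : p = Fin.castSucc i₀ := Fin.ext (by simp [hp1])
    obtain ⟨q', rfl⟩ : ∃ q' : Fin t, q = Fin.succ q' :=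
      ⟨⟨(q : ℕ) - 1, by omega⟩, Fin.ext (by simp; omega)⟩
    simp only [Fin.val_succ] at hq1
    rw [Ecol_eq, Ecol_gt c i₀ b q' (by omega)]
    exact lt_of_lt_of_le hb2 (hc.monotone (Fin.le_def.mpr (by omega)))
  · omega
  · omega
  · obtain ⟨p', rfl⟩ : ∃ p' : Fin t, p = Fin.succ p' :=
      ⟨⟨(p : ℕ) - 1, by omega⟩, Fin.ext (by simp; omega)⟩
    obtain ⟨q', rfl⟩ : ∃ q' : Fin t, q = Fin.succ q' :=
      ⟨⟨(q : ℕ) - 1, by omega⟩, Fin.ext (by simp; omega)⟩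
    simp only [Fin.val_succ] at hp1 hq1 hpq
    rw [Ecol_gt c i₀ b p' (by omega), Ecol_gt c i₀ b q' (by omega)]
    exact hc (Fin.lt_def.mpr (by omega))

lemma Ecol_del : (Ecol c i₀ b) ∘ (Fin.castSucc i₀).succAbove = c := by
  funext i
  rcases lt_or_ge (i : ℕ) (i₀ : ℕ) with h | h
  · have h1 : (Fin.castSucc i₀).succAbove i = Fin.castSucc i :=
      Fin.succAbove_of_castSucc_lt _ _ (by rw [Fin.lt_def]; simpa using h)
    simp only [Function.comp_apply, h1, Ecol_lt c i₀ b i h]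
  · have h1 : (Fin.castSucc i₀).succAbove i = Fin.succ i :=
      Fin.succAbove_of_le_castSucc _ _ (by rw [Fin.le_def]; simpa using h)
    simp only [Function.comp_apply, h1, Ecol_gt c i₀ b i h]

lemma Ecol_del_succ : (Ecol c i₀ b) ∘ (Fin.succ i₀).succAbove = Function.update c i₀ b := by
  funext i
  rcases lt_or_ge (i : ℕ) ((i₀ : ℕ) + 1) with h | h
  · have h1 : (Fin.succ i₀).succAbove i = Fin.castSucc i :=
      Fin.succAbove_of_castSucc_lt _ _ (by rw [Fin.lt_def]; simpa using h)
    rcases Nat.lt_or_ge (i : ℕ) (i₀ : ℕ) with h2 | h2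
    · have hne : i ≠ i₀ := by intro hh; rw [hh] at h2; omega
      simp only [Function.comp_apply, h1, Ecol_lt c i₀ b i h2, Function.update_of_ne hne]
    · have heq : i = i₀ := by apply Fin.ext; omega
      subst heq
      simp only [Function.comp_apply, h1, Ecol_eq, Function.update_self]
  · have h1 : (Fin.succ i₀).succAbove i = Fin.succ i :=
      Fin.succAbove_of_le_castSucc _ _ (by rw [Fin.le_def]; simpa using h)
    have hne : i ≠ i₀ := by intro hh; rw [hh] at h; omega
    simp only [Function.comp_apply, h1, Ecol_gt c i₀ b i (by omega), Function.update_of_ne hne]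

end Garnir

section GarnirId

variable (htn : t ≤ n)

/-- the Garnir (Laplace, repeated row) relation -/
lemma garnir (E : Fin (t+1) → Fin n) (i₀ : Fin t) :
    ∑ j : Fin (t+1), ((-1 : MvPolynomial (Fin n ×ₗ Fin n) K) ^ ((t : ℕ) + (j : ℕ)))
      * X (idx htn i₀ (E j)) * Dt K htn (E ∘ j.succAbove) = 0 := by
  classical
  set rr : Fin (t+1) → Fin n := Fin.snoc (vr htn) (vr htn i₀) with hrr
  set A : Matrix (Fin (t+1)) (Fin (t+1)) (MvPolynomial (Fin n ×ₗ Fin n) K) :=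
    Matrix.of fun i j => X (toLex (rr i, E j)) with hA
  have h0 : A.det = 0 := by
    apply Matrix.det_zero_of_row_eq (i_ne_j := show Fin.castSucc i₀ ≠ Fin.last t from ?_)
    · funext j
      show X (toLex (rr (Fin.castSucc i₀), E j)) = X (toLex (rr (Fin.last t), E j))
      rw [hrr]
      rw [Fin.snoc_castSucc, Fin.snoc_last]
    · intro h
      have := congrArg Fin.val h
      simp at this
      exact absurd this (Nat.ne_of_lt i₀.isLt)
  rw [Matrix.det_succ_row A (Fin.last t)] at h0
  rw [← h0]
  apply Finset.sum_congr rfl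
  intro j _
  have e1 : A (Fin.last t) j = X (idx htn i₀ (E j)) := by
    show X (toLex (rr (Fin.last t), E j)) = _
    rw [hrr, Fin.snoc_last]; rfl
  have e2 : A.submatrix (Fin.last t).succAbove j.succAbove =
      Matrix.of fun i k : Fin t => X (idx htn i ((E ∘ j.succAbove) k)) := by
    funext i k
    show A ((Fin.last t).succAbove i) (j.succAbove k) = _
    rw [Fin.succAbove_last, hA]
    show X (toLex (rr (Fin.castSucc i), E (j.succAbove k))) = _
    rw [hrr, Fin.snoc_castSucc]
    rfl
  rw [e1, e2]
  rw [show ((Fin.last t : Fin (t+1)) : ℕ) = t from rfl]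
  rfl

end GarnirId

section Cmp

variable (htn : t ≤ n) (c : Fin t → Fin n) (i₀ : Fin t) (b : Fin n)

/-- the exchanged term has exactly the same would-be lead -/
lemma cmpC : sgl htn i₀ (c i₀) + dd htn (Function.update c i₀ b) = sgl htn i₀ b + dd htn c := by
  classical
  have h1 : (fun j => sgl htn j (Function.update c i₀ b j)) =
      Function.update (fun j => sgl htn j (c j)) i₀ (sgl htn i₀ b) := by
    funext j
    by_cases h : j = i₀
    · subst h; rw [Function.update_self, Function.update_self]
    · rw [Function.update_of_ne h, Function.update_of_ne h]
  rw [dd, dd, h1, Finset.sum_update_of_mem (Finset.mem_univ i₀),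
    ← Finset.add_sum_erase _ _ (Finset.mem_univ i₀), Finset.erase_eq]
  abel

lemma cmpA (hc : StrictMono c) (hb1 : ∀ i : Fin t, (i : ℕ) < (i₀ : ℕ) → c i < b)
    (hb2 : b < c i₀) (j' : Fin t) (hj' : (j' : ℕ) < (i₀ : ℕ)) :
    toLex (sgl htn i₀ (Ecol c i₀ b (Fin.castSucc j'))
        + dd htn (Ecol c i₀ b ∘ (Fin.castSucc j').succAbove))
      < toLex (sgl htn i₀ b + dd htn c) := by
  have hA1 : Ecol c i₀ b (Fin.castSucc j') = c j' := Ecol_lt c i₀ b j' hj'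
  have hA2 : ∀ r : Fin t, (r : ℕ) < (j' : ℕ) →
      (Ecol c i₀ b ∘ (Fin.castSucc j').succAbove) r = c r := by
    intro r hr
    have h1 : (Fin.castSucc j').succAbove r = Fin.castSucc r :=
      Fin.succAbove_of_castSucc_lt _ _ (by rw [Fin.lt_def]; simpa using hr)
    simp only [Function.comp_apply, h1]
    exact Ecol_lt c i₀ b r (lt_trans hr hj')
  have hA3 : (c j' : ℕ) < ((Ecol c i₀ b (Fin.succ j')) : ℕ) := by
    rw [← hA1]
    exact Fin.lt_def.mp (Ecol_strictMono c i₀ b hc hb1 hb2 (Fin.castSucc_lt_succ (i := j')))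
  have hji : ¬ (i₀ = j') := fun h => by rw [h] at hj'; omega
  apply lt_of_row_witness htn _ _ j' (c j')
  · intro i hij s
    have hii : ¬ (i₀ = i) := fun h => by rw [← h] at hij; omega
    rw [Finsupp.add_apply, Finsupp.add_apply, sgl_apply_idx, sgl_apply_idx,
      dd_apply_idx, dd_apply_idx, hA2 i hij]
    simp [hii]
  · intro s hs
    have h1 : ¬ (Ecol c i₀ b (Fin.succ j') = s) := by
      intro h; rw [h] at hA3; omega
    have h2 : ¬ (c j' = s) := by intro h; rw [h] at hs; omega
    rw [Finsupp.add_apply, Finsupp.add_apply, sgl_apply_idx, sgl_apply_idx,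
      dd_apply_idx, dd_apply_idx]
    simp [hji, h1, h2]
  · have h1 : ¬ (Ecol c i₀ b (Fin.succ j') = c j') := by
      intro h; rw [h] at hA3; omega
    rw [Finsupp.add_apply, Finsupp.add_apply, sgl_apply_idx, sgl_apply_idx,
      dd_apply_idx, dd_apply_idx]
    simp [hji, h1]

lemma cmpB (hc : StrictMono c) (hb2 : b < c i₀) (k : Fin t) (hk : (i₀ : ℕ) < (k : ℕ)) :
    toLex (sgl htn i₀ (Ecol c i₀ b (Fin.succ k))
        + dd htn (Ecol c i₀ b ∘ (Fin.succ k).succAbove))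
      < toLex (sgl htn i₀ b + dd htn c) := by
  have hB1 : Ecol c i₀ b (Fin.succ k) = c k := Ecol_gt c i₀ b k (le_of_lt hk)
  have hB2 : ∀ r : Fin t, (r : ℕ) ≤ (i₀ : ℕ) →
      (Ecol c i₀ b ∘ (Fin.succ k).succAbove) r = Ecol c i₀ b (Fin.castSucc r) := by
    intro r hr
    have h1 : (Fin.succ k).succAbove r = Fin.castSucc r :=
      Fin.succAbove_of_castSucc_lt _ _ (by rw [Fin.lt_def]; simp; omega)
    simp only [Function.comp_apply, h1]
  have hki : (c i₀ : ℕ) < (c k : ℕ) := Fin.lt_def.mp (hc (Fin.lt_def.mpr hk))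
  have hbi : (b : ℕ) < (c i₀ : ℕ) := Fin.lt_def.mp hb2
  apply lt_of_row_witness htn _ _ i₀ (c i₀)
  · intro i hij s
    have hii : ¬ (i₀ = i) := fun h => by rw [← h] at hij; omega
    rw [Finsupp.add_apply, Finsupp.add_apply, sgl_apply_idx, sgl_apply_idx,
      dd_apply_idx, dd_apply_idx, hB2 i (le_of_lt hij), Ecol_lt c i₀ b i hij]
    simp [hii]
  · intro s hs
    have h1 : ¬ (Ecol c i₀ b (Fin.succ k) = s) := by
      rw [hB1]; intro h; rw [h] at hki; omega
    have h2 : ¬ (c i₀ = s) := by intro h; rw [h] at hs; omega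
    rw [Finsupp.add_apply, Finsupp.add_apply, sgl_apply_idx, sgl_apply_idx,
      dd_apply_idx, dd_apply_idx, hB2 i₀ (le_refl _), Ecol_eq]
    simp [h1, h2]
  · have h1 : ¬ (Ecol c i₀ b (Fin.succ k) = c i₀) := by
      rw [hB1]; intro h; rw [h] at hki; omega
    have h2 : ¬ (b = c i₀) := by intro h; rw [h] at hbi; omega
    rw [Finsupp.add_apply, Finsupp.add_apply, sgl_apply_idx, sgl_apply_idx,
      dd_apply_idx, dd_apply_idx, hB2 i₀ (le_refl _), Ecol_eq]
    simp [h1, h2]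

end Cmp

section Step

variable (htn : t ≤ n)

lemma mon_mul_X (μt : (Fin n ×ₗ Fin n) →₀ ℕ) (p : Fin n ×ₗ Fin n) :
    (monomial μt (1 : K)) * X p = monomial (μt + Finsupp.single p 1) 1 := by
  rw [X, monomial_mul, one_mul]

lemma step_eq (c : Fin t → Fin n) (i₀ : Fin t) (b : Fin n) (μt : (Fin n ×ₗ Fin n) →₀ ℕ) :
    monomial (μt + sgl htn i₀ b) 1 * Dt K htn c =
      ∑ j ∈ Finset.univ.erase (Fin.castSucc i₀),
        (-((-1 : MvPolynomial (Fin n ×ₗ Fin n) K) ^ ((t : ℕ) + (i₀ : ℕ))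
            * (-1 : MvPolynomial (Fin n ×ₗ Fin n) K) ^ ((t : ℕ) + (j : ℕ))))
          * (monomial (μt + sgl htn i₀ (Ecol c i₀ b j)) 1
              * Dt K htn (Ecol c i₀ b ∘ j.succAbove)) := by
  classical
  have hg := garnir (K := K) htn (Ecol c i₀ b) i₀
  rw [← Finset.add_sum_erase _ _ (Finset.mem_univ (Fin.castSucc i₀)), Ecol_eq, Ecol_del] at hg
  have hval : ((Fin.castSucc i₀ : Fin (t+1)) : ℕ) = (i₀ : ℕ) := by simp
  rw [hval] at hg
  have hS : (∑ j ∈ Finset.univ.erase (Fin.castSucc i₀),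
        (-1 : MvPolynomial (Fin n ×ₗ Fin n) K) ^ ((t : ℕ) + (j : ℕ))
          * X (idx htn i₀ (Ecol c i₀ b j)) * Dt K htn (Ecol c i₀ b ∘ j.succAbove))
      = - ((-1 : MvPolynomial (Fin n ×ₗ Fin n) K) ^ ((t : ℕ) + (i₀ : ℕ))
          * X (idx htn i₀ b) * Dt K htn c) := eq_neg_of_add_eq_zero_right hg
  have hu : ((-1 : MvPolynomial (Fin n ×ₗ Fin n) K) ^ ((t : ℕ) + (i₀ : ℕ)))
      * ((-1 : MvPolynomial (Fin n ×ₗ Fin n) K) ^ ((t : ℕ) + (i₀ : ℕ))) = 1 := by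
    rw [← pow_add]
    exact Even.neg_one_pow ⟨(t : ℕ) + (i₀ : ℕ), by ring⟩
  have hXD : X (idx htn i₀ b) * Dt K htn c =
      (-(-1 : MvPolynomial (Fin n ×ₗ Fin n) K) ^ ((t : ℕ) + (i₀ : ℕ)))
        * ∑ j ∈ Finset.univ.erase (Fin.castSucc i₀),
            (-1 : MvPolynomial (Fin n ×ₗ Fin n) K) ^ ((t : ℕ) + (j : ℕ))
              * X (idx htn i₀ (Ecol c i₀ b j)) * Dt K htn (Ecol c i₀ b ∘ j.succAbove) := by
    rw [hS]
    calc X (idx htn i₀ b) * Dt K htn c = 1 * (X (idx htn i₀ b) * Dt K htn c) := (one_mul _).symm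
      _ = (((-1 : MvPolynomial (Fin n ×ₗ Fin n) K) ^ ((t : ℕ) + (i₀ : ℕ)))
            * ((-1 : MvPolynomial (Fin n ×ₗ Fin n) K) ^ ((t : ℕ) + (i₀ : ℕ))))
          * (X (idx htn i₀ b) * Dt K htn c) := by rw [hu]
      _ = _ := by ring
  calc monomial (μt + sgl htn i₀ b) 1 * Dt K htn c
      = monomial μt 1 * (X (idx htn i₀ b) * Dt K htn c) := by
        rw [← mul_assoc, mon_mul_X]; rfl
    _ = monomial μt 1 * ((-(-1 : MvPolynomial (Fin n ×ₗ Fin n) K) ^ ((t : ℕ) + (i₀ : ℕ)))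
          * ∑ j ∈ Finset.univ.erase (Fin.castSucc i₀),
            (-1 : MvPolynomial (Fin n ×ₗ Fin n) K) ^ ((t : ℕ) + (j : ℕ))
              * X (idx htn i₀ (Ecol c i₀ b j)) * Dt K htn (Ecol c i₀ b ∘ j.succAbove)) := by
        rw [hXD]
    _ = ∑ j ∈ Finset.univ.erase (Fin.castSucc i₀),
          monomial μt 1 * ((-(-1 : MvPolynomial (Fin n ×ₗ Fin n) K) ^ ((t : ℕ) + (i₀ : ℕ)))
            * ((-1 : MvPolynomial (Fin n ×ₗ Fin n) K) ^ ((t : ℕ) + (j : ℕ))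
              * X (idx htn i₀ (Ecol c i₀ b j)) * Dt K htn (Ecol c i₀ b ∘ j.succAbove))) := by
        rw [Finset.mul_sum, Finset.mul_sum]
    _ = _ := by
        refine Finset.sum_congr rfl fun j _ => ?_
        rw [show ∀ z w : MvPolynomial (Fin n ×ₗ Fin n) K,
            monomial μt 1 * ((-(-1 : MvPolynomial (Fin n ×ₗ Fin n) K) ^ ((t : ℕ) + (i₀ : ℕ)))
              * ((-1 : MvPolynomial (Fin n ×ₗ Fin n) K) ^ ((t : ℕ) + (j : ℕ)) * z * w))
            = (-((-1 : MvPolynomial (Fin n ×ₗ Fin n) K) ^ ((t : ℕ) + (i₀ : ℕ))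
                * (-1 : MvPolynomial (Fin n ×ₗ Fin n) K) ^ ((t : ℕ) + (j : ℕ))))
              * ((monomial μt 1 * z) * w) from fun z w => by ring,
          mon_mul_X]
        rfl

end Step

section Witness

variable (htn : t ≤ n)

lemma dd_pos (d : Fin t → Fin n) (w : Fin n ×ₗ Fin n) (h : 0 < dd htn d w) :
    ∃ r : Fin t, w = idx htn r (d r) := by
  classical
  rw [dd, Finsupp.finset_sum_apply] at h
  have h2 : ∃ i ∈ Finset.univ, sgl htn i (d i) w ≠ 0 := by
    by_contra hh
    push_neg at hh
    rw [Finset.sum_eq_zero (fun i hi => hh i hi)] at h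
    omega
  obtain ⟨i, -, hi⟩ := h2
  rw [sgl, Finsupp.single_apply] at hi
  refine ⟨i, ?_⟩
  by_contra hne
  rw [if_neg (fun hh => hne hh.symm)] at hi
  exact hi rfl

lemma nongreedy_witness (aa : ℕ) (μ : (Fin n ×ₗ Fin n) →₀ ℕ) (c : Fin t → Fin n)
    (hOk : Ok aa c) (hng : ¬ Greedy htn aa μ c) :
    ∃ (i₀ : Fin t) (b : Fin n), (∀ i : Fin t, (i : ℕ) < (i₀ : ℕ) → c i < b) ∧ b < c i₀ ∧
      aa ≤ (b : ℕ) + 1 ∧ 0 < μ (idx htn i₀ b) := by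
  classical
  rw [Greedy] at hng
  push_neg at hng
  obtain ⟨d, hdOk, hdd, hlt⟩ := hng hOk
  have hlt2 : toLex (dd htn c) < toLex (dd htn d) := hlt
  obtain ⟨w, hw1, hw2⟩ := (Finsupp.lex_def.mp hlt2 :
    ∃ j, (∀ p, p < j → dd htn c p = dd htn d p) ∧ dd htn c j < dd htn d j)
  obtain ⟨r, rfl⟩ := dd_pos htn d w (by omega)
  rw [dd_apply_idx, dd_apply_idx, if_pos rfl] at hw2
  have hcr : ¬ (c r = d r) := by
    intro h
    rw [if_pos h] at hw2
    omega
  have hcd : ∀ i : Fin t, (i : ℕ) < (r : ℕ) → c i = d i := by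
    intro i hi
    have hp : (idx htn i (d i)) < (idx htn r (d r)) := by
      rw [idx, idx]
      rw [Prod.Lex.lt_iff]
      left
      rw [Fin.lt_def]
      exact hi
    have := hw1 _ hp
    rw [dd_apply_idx, dd_apply_idx, if_pos rfl] at this
    by_contra hne
    rw [if_neg hne] at this
    omega
  have hblt : d r < c r := by
    rcases lt_trichotomy (d r) (c r) with h | h | h
    · exact h
    · exact absurd h.symm hcr
    · exfalso
      have hp : (idx htn r (c r)) < (idx htn r (d r)) := by
        rw [idx, idx, Prod.Lex.lt_iff]
        right
        exact ⟨rfl, h⟩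
      have := hw1 _ hp
      rw [dd_apply_idx, dd_apply_idx, if_pos rfl, if_neg (fun hh => hcr hh.symm)] at this
      omega
  refine ⟨r, d r, ?_, hblt, hdOk.2 r, ?_⟩
  · intro i hi
    rw [hcd i hi]
    exact hdOk.1 (Fin.lt_def.mpr hi)
  · have h3 := hdd (idx htn r (d r))
    rw [Finsupp.add_apply, dd_apply_idx, dd_apply_idx, if_pos rfl,
      if_neg (fun hh => hcr hh)] at h3
    omega

lemma Ecol_bound (c : Fin t → Fin n) (i₀ : Fin t) (b : Fin n) (aa : ℕ)
    (h2 : ∀ j, aa ≤ (c j : ℕ) + 1) (hba : aa ≤ (b : ℕ) + 1) (q : Fin (t+1)) :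
    aa ≤ (Ecol c i₀ b q : ℕ) + 1 := by
  rw [Ecol]
  split_ifs
  · exact h2 _
  · exact hba
  · exact h2 _

lemma Ecol_ok (c : Fin t → Fin n) (i₀ : Fin t) (b : Fin n) (aa : ℕ) (hOk : Ok aa c)
    (hb1 : ∀ i : Fin t, (i : ℕ) < (i₀ : ℕ) → c i < b) (hb2 : b < c i₀)
    (hba : aa ≤ (b : ℕ) + 1) (j : Fin (t+1)) :
    Ok aa (Ecol c i₀ b ∘ j.succAbove) :=
  ⟨(Ecol_strictMono c i₀ b hOk.1 hb1 hb2).comp (Fin.strictMono_succAbove j),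
    fun k => Ecol_bound c i₀ b aa hOk.2 hba _⟩

lemma sum_update_lt (c : Fin t → Fin n) (i₀ : Fin t) (b : Fin n) (hb2 : b < c i₀) :
    (∑ i, ((Function.update c i₀ b i : Fin n) : ℕ)) < ∑ i, ((c i : ℕ)) := by
  classical
  have h1 : (fun i => ((Function.update c i₀ b i : Fin n) : ℕ)) =
      Function.update (fun i => ((c i : ℕ))) i₀ ((b : ℕ)) := by
    funext j
    by_cases h : j = i₀
    · subst h; rw [Function.update_self, Function.update_self]
    · rw [Function.update_of_ne h, Function.update_of_ne h]
  rw [h1, Finset.sum_update_of_mem (Finset.mem_univ i₀),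
    ← Finset.add_sum_erase _ _ (Finset.mem_univ i₀), Finset.erase_eq]
  have hb : (b : ℕ) < (c i₀ : ℕ) := hb2
  omega

end Witness

section MainInduction

variable (htn : t ≤ n)

lemma coeff_C_eq (e1 e2 : ℕ) :
    (-((-1 : MvPolynomial (Fin n ×ₗ Fin n) K) ^ e1
        * (-1 : MvPolynomial (Fin n ×ₗ Fin n) K) ^ e2)) =
      C (-((-1 : K) ^ e1 * (-1 : K) ^ e2)) := by
  rw [map_neg, map_mul, map_pow, map_pow, map_neg, map_one]

lemma Gstar (aa : ℕ) (μ : (Fin n ×ₗ Fin n) →₀ ℕ) (c : Fin t → Fin n) (hOk : Ok aa c) :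
    monomial μ 1 * Dt K htn c ∈ Submodule.span K (GPs K htn aa) := by
  classical
  set motive : Lex ((Fin n ×ₗ Fin n) →₀ ℕ) × ℕ → Prop := fun z =>
    ∀ (μ : (Fin n ×ₗ Fin n) →₀ ℕ) (c : Fin t → Fin n), Ok aa c →
      (toLex (μ + dd htn c), ∑ i, ((c i : ℕ))) = z →
      monomial μ 1 * Dt K htn c ∈ Submodule.span K (GPs K htn aa) with hmot
  have wf : WellFounded (Prod.Lex ((· < ·) : Lex ((Fin n ×ₗ Fin n) →₀ ℕ) →
      Lex ((Fin n ×ₗ Fin n) →₀ ℕ) → Prop) ((· < ·) : ℕ → ℕ → Prop)) :=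
    WellFounded.prod_lex wellFounded_lt wellFounded_lt
  have main : ∀ z, motive z := by
    intro z
    induction z using WellFounded.induction wf with
    | _ z IH =>
      intro μ c hOk hz
      subst hz
      by_cases hg : Greedy htn aa μ c
      · exact Submodule.subset_span ⟨μ, c, hg, rfl⟩
      · obtain ⟨i₀, b, hb1, hb2, hba, hμb⟩ := nongreedy_witness htn aa μ c hOk hg
        have hle : sgl htn i₀ b ≤ μ := by
          rw [sgl]
          rw [Finsupp.single_le_iff]
          omega
        have hμeq : μ = (μ - sgl htn i₀ b) + sgl htn i₀ b := (tsub_add_cancel_of_le hle).symm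
        set μt := μ - sgl htn i₀ b with hμt
        rw [hμeq] at IH
        rw [hμeq, step_eq htn c i₀ b μt]
        apply Submodule.sum_mem
        intro j hj
        have hjne : j ≠ Fin.castSucc i₀ := (Finset.mem_erase.mp hj).1
        rw [coeff_C_eq, ← smul_eq_C_mul]
        apply Submodule.smul_mem
        -- case analysis on position of j
        have hjt := j.isLt
        have hit := i₀.isLt
        rcases Nat.lt_trichotomy (j : ℕ) ((i₀ : ℕ)) with hcase | hcase | hcase
        · -- case A
          obtain ⟨j', rfl⟩ : ∃ j' : Fin t, j = Fin.castSucc j' :=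
            ⟨⟨(j : ℕ), by omega⟩, Fin.ext (by simp)⟩
          simp only [Fin.coe_castSucc] at hcase
          refine IH (toLex (μt + sgl htn i₀ (Ecol c i₀ b (Fin.castSucc j'))
              + dd htn (Ecol c i₀ b ∘ (Fin.castSucc j').succAbove)),
            ∑ i, (((Ecol c i₀ b ∘ (Fin.castSucc j').succAbove) i : ℕ)))
            ?_ _ _ (Ecol_ok c i₀ b aa hOk hb1 hb2 hba _) rfl
          apply Prod.Lex.left
          have hstep := cmpA htn c i₀ b hOk.1 hb1 hb2 j' hcase
          calc toLex (μt + sgl htn i₀ (Ecol c i₀ b (Fin.castSucc j'))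
                + dd htn (Ecol c i₀ b ∘ (Fin.castSucc j').succAbove))
              = toLex μt + toLex (sgl htn i₀ (Ecol c i₀ b (Fin.castSucc j'))
                + dd htn (Ecol c i₀ b ∘ (Fin.castSucc j').succAbove)) := by
                rw [add_assoc]; rfl
            _ < toLex μt + toLex (sgl htn i₀ b + dd htn c) := by
                exact add_lt_add_right hstep (toLex μt)
            _ = toLex (μt + sgl htn i₀ b + dd htn c) := by rw [add_assoc]; rfl
        · exact absurd (Fin.ext hcase : j = Fin.castSucc i₀) hjne
        · -- cases C and B
          obtain ⟨k, rfl⟩ : ∃ k : Fin t, j = Fin.succ k :=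
            ⟨⟨(j : ℕ) - 1, by omega⟩, Fin.ext (by simp; omega)⟩
          simp only [Fin.val_succ] at hcase
          rcases Nat.lt_or_ge (i₀ : ℕ) (k : ℕ) with hcase2 | hcase2
          · -- case B
            refine IH (toLex (μt + sgl htn i₀ (Ecol c i₀ b (Fin.succ k))
                + dd htn (Ecol c i₀ b ∘ (Fin.succ k).succAbove)),
              ∑ i, (((Ecol c i₀ b ∘ (Fin.succ k).succAbove) i : ℕ)))
              ?_ _ _ (Ecol_ok c i₀ b aa hOk hb1 hb2 hba _) rfl
            apply Prod.Lex.left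
            have hstep := cmpB htn c i₀ b hOk.1 hb2 k hcase2
            calc toLex (μt + sgl htn i₀ (Ecol c i₀ b (Fin.succ k))
                  + dd htn (Ecol c i₀ b ∘ (Fin.succ k).succAbove))
                = toLex μt + toLex (sgl htn i₀ (Ecol c i₀ b (Fin.succ k))
                  + dd htn (Ecol c i₀ b ∘ (Fin.succ k).succAbove)) := by
                  rw [add_assoc]; rfl
              _ < toLex μt + toLex (sgl htn i₀ b + dd htn c) := by
                  exact add_lt_add_right hstep (toLex μt)
              _ = toLex (μt + sgl htn i₀ b + dd htn c) := by rw [add_assoc]; rfl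
          · -- case C : k = i₀
            have hki : k = i₀ := Fin.ext (by omega)
            subst hki
            have hupd : Ecol c k b ∘ (Fin.succ k).succAbove = Function.update c k b :=
              Ecol_del_succ c k b
            have hcol : Ecol c k b (Fin.succ k) = c k := Ecol_gt c k b k (le_refl _)
            have hfst : toLex (μt + sgl htn k (Ecol c k b (Fin.succ k))
                + dd htn (Ecol c k b ∘ (Fin.succ k).succAbove))
                = toLex (μt + sgl htn k b + dd htn c) := by
              rw [hupd, hcol, add_assoc, add_assoc]
              exact congrArg toLex (congrArg (μt + ·) (cmpC htn c k b))
            refine IH (toLex (μt + sgl htn k b + dd htn c),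
              ∑ i, (((Ecol c k b ∘ (Fin.succ k).succAbove) i : ℕ)))
              ?_ _ _ (Ecol_ok c k b aa hOk hb1 hb2 hba _) (by rw [hfst])
            apply Prod.Lex.right
            rw [hupd]
            exact sum_update_lt c k b hb2
  exact main _ μ c hOk rfl

end MainInduction

section Assembly

variable (htn : t ≤ n)

lemma mul_mem_spanProds (aa : ℕ) (p x : MvPolynomial (Fin n ×ₗ Fin n) K)
    (hx : x ∈ Submodule.span K (Prods K htn aa)) :
    p * x ∈ Submodule.span K (Prods K htn aa) := by
  classical
  induction hx using Submodule.span_induction with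
  | mem q hq =>
      obtain ⟨μ, c, hOk, rfl⟩ := hq
      rw [p.as_sum, Finset.sum_mul]
      apply Submodule.sum_mem
      intro m _
      have h1 : (monomial m (coeff m p)) * (monomial μ 1 * Dt K htn c)
          = (coeff m p) • (monomial (m + μ) 1 * Dt K htn c) := by
        rw [← mul_assoc, monomial_mul, mul_one, ← smul_mul_assoc, smul_monomial,
          smul_eq_mul, mul_one]
      rw [h1]
      exact Submodule.smul_mem _ _ (Submodule.subset_span ⟨m + μ, c, hOk, rfl⟩)
  | zero => rw [mul_zero]; exact Submodule.zero_mem _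
  | add x y _ _ hx hy => rw [mul_add]; exact Submodule.add_mem _ hx hy
  | smul k x _ hx => rw [mul_smul_comm]; exact Submodule.smul_mem _ _ hx

lemma neIdeal_le_spanProds (aa : ℕ) (x : MvPolynomial (Fin n ×ₗ Fin n) K)
    (hx : x ∈ Ideal.span {f : MvPolynomial (Fin n ×ₗ Fin n) K | ∃ c : Fin t → Fin n,
      Ok aa c ∧ f = Dt K htn c}) :
    x ∈ Submodule.span K (Prods K htn aa) := by
  induction hx using Submodule.span_induction with
  | mem q hq =>
      obtain ⟨c, hOk, rfl⟩ := hq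
      have : Dt K htn c = monomial 0 1 * Dt K htn c := by
        rw [monomial_zero', C_1, one_mul]
      rw [this]
      exact Submodule.subset_span ⟨0, c, hOk, rfl⟩
  | zero => exact Submodule.zero_mem _
  | add x y _ _ hx hy => exact Submodule.add_mem _ hx hy
  | smul r x _ hx => exact mul_mem_spanProds htn aa r x hx

lemma greedy_unique (aa : ℕ) (μ1 μ2 : (Fin n ×ₗ Fin n) →₀ ℕ) (c1 c2 : Fin t → Fin n)
    (h1 : Greedy htn aa μ1 c1) (h2 : Greedy htn aa μ2 c2)
    (h : μ1 + dd htn c1 = μ2 + dd htn c2) : μ1 = μ2 ∧ c1 = c2 := by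
  have hd1 : dd htn c2 ≤ μ1 + dd htn c1 := by rw [h]; exact le_add_self
  have hd2 : dd htn c1 ≤ μ2 + dd htn c2 := by rw [← h]; exact le_add_self
  have hle1 := h1.2 c2 h2.1 hd1
  have hle2 := h2.2 c1 h1.1 hd2
  have hdd : dd htn c1 = dd htn c2 := toLex.injective (le_antisymm hle2 hle1)
  have hc : c1 = c2 := by
    funext i
    have e1 := dd_apply_idx htn c1 i (c1 i)
    rw [if_pos rfl, hdd, dd_apply_idx] at e1
    by_contra hne
    rw [if_neg (fun hh => hne hh.symm)] at e1
    omega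
  subst hc
  exact ⟨add_right_cancel h, rfl⟩

lemma lead_of_mem_spanGPs (aa : ℕ) (f : MvPolynomial (Fin n ×ₗ Fin n) K)
    (hf : f ∈ Submodule.span K (GPs K htn aa)) (m : (Fin n ×ₗ Fin n) →₀ ℕ)
    (hm : m ∈ f.support) (hmax : ∀ m' ∈ f.support, toLex m' ≤ toLex m) :
    ∃ (μ : (Fin n ×ₗ Fin n) →₀ ℕ) (c : Fin t → Fin n), Ok aa c ∧ m = μ + dd htn c := by
  classical
  obtain ⟨l, hlsub, hlsum⟩ := Submodule.mem_span_set.mp hf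
  set s := l.support with hs
  have hrep : f = ∑ q ∈ s, l q • q := hlsum.symm
  -- choose data for each q in s
  have hchoice : ∀ q : {x // x ∈ s}, ∃ μ c, Greedy htn aa μ c ∧
      (q : MvPolynomial (Fin n ×ₗ Fin n) K) = monomial μ 1 * Dt K htn c :=
    fun q => hlsub q.2
  choose μf cf hGf hqf using hchoice
  have hsne : s.Nonempty := by
    by_contra hemp
    rw [Finset.not_nonempty_iff_eq_empty] at hemp
    rw [hemp, Finset.sum_empty] at hrep
    rw [hrep] at hm
    simp at hm
  have hane : s.attach.Nonempty := ⟨⟨hsne.choose, hsne.choose_spec⟩, Finset.mem_attach _ _⟩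
  obtain ⟨qm, -, hqm⟩ := Finset.exists_max_image s.attach
    (fun q => toLex (μf q + dd htn (cf q))) hane
  have hqmax : ∀ q : {x // x ∈ s}, toLex (μf q + dd htn (cf q)) ≤
      toLex (μf qm + dd htn (cf qm)) := fun q => hqm q (Finset.mem_attach _ _)
  set M : (Fin n ×ₗ Fin n) →₀ ℕ := μf qm + dd htn (cf qm) with hM
  -- coefficient of M in f is l qm ≠ 0
  have hcoeff : coeff M f = l (qm : MvPolynomial (Fin n ×ₗ Fin n) K) := by
    rw [hrep, ← Finset.sum_attach s (fun q => l q • q)]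
    rw [coeff_sum]
    rw [Finset.sum_eq_single_of_mem qm (Finset.mem_attach _ _)]
    · rw [coeff_smul, hqf, hM, coeff_top htn _ _ (hGf qm).1.1]
      simp
    · intro q _ hqne
      rw [coeff_smul, hqf]
      have hz : coeff M (monomial (μf q) 1 * Dt K htn (cf q)) = 0 := by
        by_contra hnz
        have hin : M ∈ (monomial (μf q) 1 * Dt K htn (cf q)).support :=
          mem_support_iff.mpr hnz
        have hle := supp_le_top htn (μf q) (cf q) (hGf q).1.1 M hin
        have heq : μf q + dd htn (cf q) = M :=
          toLex.injective (le_antisymm (hqmax q) hle)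
        obtain ⟨hμeq, hceq⟩ := greedy_unique htn aa _ _ _ _ (hGf q) (hGf qm) heq
        apply hqne
        apply Subtype.ext
        rw [hqf, hqf, hμeq, hceq]
      rw [hz, smul_zero]
  have hlqm : l (qm : MvPolynomial (Fin n ×ₗ Fin n) K) ≠ 0 :=
    Finsupp.mem_support_iff.mp qm.2
  -- M is in the support of f, so toLex M ≤ toLex m
  have hMmem : M ∈ f.support := mem_support_iff.mpr (by rw [hcoeff]; exact hlqm)
  have h1 : toLex M ≤ toLex m := hmax M hMmem
  -- conversely m is in the support of some q, so toLex m ≤ toLex M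
  have h2 : toLex m ≤ toLex M := by
    have : m ∈ (∑ q ∈ s.attach, l (q : MvPolynomial (Fin n ×ₗ Fin n) K) • (q : MvPolynomial (Fin n ×ₗ Fin n) K)).support := by
      rw [← Finset.sum_attach s (fun q => l q • q)] at hrep
      rw [← hrep]
      exact hm
    have h3 := MvPolynomial.support_sum this
    rw [Finset.mem_biUnion] at h3
    obtain ⟨q, -, hq⟩ := h3
    have h4 : q.1.support ⊇ (l (q : MvPolynomial (Fin n ×ₗ Fin n) K) • (q : MvPolynomial (Fin n ×ₗ Fin n) K)).support :=
      Finsupp.support_smul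
    have h5 : m ∈ (monomial (μf q) 1 * Dt K htn (cf q)).support := by
      rw [← hqf]; exact h4 hq
    exact le_trans (supp_le_top htn (μf q) (cf q) (hGf q).1.1 m h5) (hqmax q)
  have hmM : m = M := toLex.injective (le_antisymm h2 h1)
  exact ⟨μf qm, cf qm, (hGf qm).1, by rw [hmM]⟩

end Assembly

end
end LexNE

open LexNE in
/-- For all `t, a > 0` with `t + a ≤ n + 1`, the initial ideal of `I_t(a)` with respect
to the lexicographic order with `X_{11} > X_{12} > ⋯ > X_{nn}` equals `J_t(a)`. -/
theorem lexInitialIdeal_neIdeal (K : Type*) [Field K] (n t a : ℕ)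
    (ht : 0 < t) (ha : 0 < a) (hta : t + a ≤ n + 1) :
    lexInitialIdeal (neIdealL K n t a) = neMonIdealL K n t a := by
  classical
  have htn : t ≤ n := by omega
  -- normalize the generating set of the determinantal ideal
  have hset1 : {f : MvPolynomial (Fin n ×ₗ Fin n) K | ∃ r c : Fin t → Fin n,
      (∀ i : Fin t, (r i : ℕ) = (i : ℕ)) ∧ StrictMono c ∧ (∀ j : Fin t, a ≤ (c j : ℕ) + 1) ∧
      f = Matrix.det (Matrix.of fun i j : Fin t => X (toLex (r i, c j)))} =
      {f : MvPolynomial (Fin n ×ₗ Fin n) K | ∃ c : Fin t → Fin n, Ok a c ∧ f = Dt K htn c} := by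
    ext f
    constructor
    · rintro ⟨r, c, hr, hsm, hb, rfl⟩
      have hrv : r = vr htn := funext fun i => Fin.ext (hr i)
      subst hrv
      exact ⟨c, ⟨hsm, hb⟩, rfl⟩
    · rintro ⟨c, ⟨hsm, hb⟩, rfl⟩
      exact ⟨vr htn, c, fun i => rfl, hsm, hb, rfl⟩
  have hIeq : neIdealL K n t a = Ideal.span {f : MvPolynomial (Fin n ×ₗ Fin n) K |
      ∃ c : Fin t → Fin n, Ok a c ∧ f = Dt K htn c} := by
    rw [neIdealL, hset1]
  apply le_antisymm
  · -- initial ideal is contained in the monomial ideal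
    rw [lexInitialIdeal]
    apply Ideal.span_le.mpr
    rintro g ⟨f, hfI, m, hm, hmax, rfl⟩
    rw [hIeq] at hfI
    have hf1 : f ∈ Submodule.span K (Prods K htn a) := neIdeal_le_spanProds htn a f hfI
    have hf2 : f ∈ Submodule.span K (GPs K htn a) := by
      refine Submodule.span_le.mpr ?_ hf1
      rintro q ⟨μ, c, hOk, rfl⟩
      exact Gstar htn a μ c hOk
    obtain ⟨μ, c, hOk, hmeq⟩ := lead_of_mem_spanGPs htn a f hf2 m hm hmax
    have hsplit : (monomial m (1 : K)) = monomial μ 1 * monomial (dd htn c) 1 := by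
      rw [monomial_mul, mul_one, hmeq]
    rw [hsplit]
    apply Ideal.mul_mem_left
    apply Ideal.subset_span
    exact ⟨vr htn, c, fun i => rfl, hOk.1, hOk.2,
      (prodX Finset.univ (fun i => idx htn i (c i))).symm⟩
  · -- the monomial ideal is contained in the initial ideal
    rw [neMonIdealL]
    apply Ideal.span_le.mpr
    rintro g ⟨r, c, hr, hsm, hb, rfl⟩
    have hrv : r = vr htn := funext fun i => Fin.ext (hr i)
    subst hrv
    have hgeq : (∏ i : Fin t, (X (toLex (vr htn i, c i)) : MvPolynomial (Fin n ×ₗ Fin n) K))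
        = monomial (dd htn c) 1 := prodX Finset.univ (fun i => idx htn i (c i))
    rw [hgeq]
    apply Ideal.subset_span
    refine ⟨Dt K htn c, ?_, dd htn c, ?_, ?_, rfl⟩
    · rw [neIdealL]
      exact Ideal.subset_span ⟨vr htn, c, fun i => rfl, hsm, hb, rfl⟩
    · rw [MvPolynomial.mem_support_iff]
      have h1 := coeff_top (K := K) htn 0 c hsm
      rw [zero_add, monomial_zero', C_1, one_mul] at h1
      rw [h1]
      exact one_ne_zero
    · intro m' hm'
      have h2 := supp_le_top (K := K) htn 0 c hsm m'
      rw [zero_add, monomial_zero', C_1, one_mul] at h2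
      exact h2 hm'
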